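/- Let Q be a multiset of N real numbers and let σ̂ be any element of Q whose rank lies in the interval [(k−ε)N/(r+1), (k+ε)N/(r+1)] for each k ∈ [1, r] (with σ̂₀ = −∞, σ̂_{r+1} = +∞ and 0 < ε < 1). Then for each k ∈ [1, r+1], the number of elements of Q in the open interval (σ̂_{k−1}, σ̂_k) is at most (1 + 2ε)N/(r+1). -/

import Mathlib

open scoped Classical in
/-- Approximate quantiles: if each `σ̂ k` has rank within `[(k-ε)N/(r+1), (k+ε)N/(r+1)]`,
then at most `(1+2ε)N/(r+1)` elements lie strictly between consecutive `σ̂`'s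
(with `σ̂₀ = -∞`, `σ̂_{r+1} = +∞`). -/
theorem stmt19 (Q : Multiset ℝ) (N r : ℕ) (hN : Q.card = N) (hr : 1 ≤ r)
    (ε : ℝ) (hε0 : 0 < ε) (hε1 : ε < 1)
    (σ : ℕ → ℝ)
    (hmem : ∀ k, 1 ≤ k → k ≤ r → σ k ∈ Q)
    (hrank : ∀ k, 1 ≤ k → k ≤ r → ∃ m : ℕ,
      ((k : ℝ) - ε) * N / (r + 1) ≤ m ∧ (m : ℝ) ≤ ((k : ℝ) + ε) * N / (r + 1) ∧
      (Q.filter (fun y => y < σ k)).card < m ∧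
      m ≤ (Q.filter (fun y => y ≤ σ k)).card)
    (hmono : ∀ k, 1 ≤ k → k < r → σ k ≤ σ (k + 1)) :
    ∀ k, 1 ≤ k → k ≤ r + 1 →
      ((Q.filter (fun y => (k = 1 ∨ σ (k - 1) < y) ∧ (k = r + 1 ∨ y < σ k))).card : ℝ)
        ≤ (1 + 2 * ε) * N / (r + 1) := by
  intro k hk1 hk2
  have hr1 : (0:ℝ) < (r:ℝ) + 1 := by positivity
  have hN0 : (0:ℝ) ≤ (N:ℝ) := by positivity
  by_cases hk1' : k = 1
  · subst hk1'
    have hne : (1:ℕ) ≠ r + 1 := by omega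
    obtain ⟨m, hm1, hm2, hm3, hm4⟩ := hrank 1 le_rfl hr
    have hfe : Q.filter (fun y => (1 = 1 ∨ σ (1 - 1) < y) ∧ (1 = r + 1 ∨ y < σ 1))
        = Q.filter (fun y => y < σ 1) := by
      apply Multiset.filter_congr
      intro y _
      simp [hne, show r ≠ 0 by omega]
    rw [hfe]
    have h1 : ((Q.filter (fun y => y < σ 1)).card : ℝ) ≤ (m : ℝ) - 1 := by
      have h := (Nat.cast_le (α := ℝ)).mpr (Nat.succ_le_of_lt hm3)
      push_cast at h
      linarith
    have h3 : ((1:ℝ) + ε) * N / (r + 1) ≤ (1 + 2 * ε) * N / (r + 1) := by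
      gcongr
      linarith
    push_cast at hm2
    linarith
  · by_cases hk2' : k = r + 1
    · subst hk2'
      have hne : r + 1 ≠ 1 := by omega
      obtain ⟨m, hm1, hm2, hm3, hm4⟩ := hrank r hr le_rfl
      have hfe : Q.filter (fun y => (r + 1 = 1 ∨ σ (r + 1 - 1) < y) ∧ (r + 1 = r + 1 ∨ y < σ (r + 1)))
          = Q.filter (fun y => σ r < y) := by
        apply Multiset.filter_congr
        intro y _
        simp [hne, show r ≠ 0 by omega]
      rw [hfe]
      have hsplit : (Q.filter (fun y => y ≤ σ r)).card + (Q.filter (fun y => σ r < y)).card = N := by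
        have := Multiset.filter_add_not (fun y => y ≤ σ r) Q
        have hc := congrArg Multiset.card this
        rw [Multiset.card_add, hN] at hc
        have : Q.filter (fun y => ¬ y ≤ σ r) = Q.filter (fun y => σ r < y) := by
          apply Multiset.filter_congr; intro y _; simp
        rw [this] at hc
        exact hc
      have h1 : ((Q.filter (fun y => σ r < y)).card : ℝ) = (N : ℝ) - ((Q.filter (fun y => y ≤ σ r)).card : ℝ) := by
        have := hsplit; push_cast [← this]; ring
      have h2 : ((r:ℝ) - ε) * N / (r + 1) ≤ ((Q.filter (fun y => y ≤ σ r)).card : ℝ) := by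
        refine hm1.trans ?_; exact_mod_cast hm4
      have key : (N:ℝ) - ((r:ℝ) - ε) * N / ((r:ℝ) + 1) = (1 + ε) * N / ((r:ℝ) + 1) := by
        field_simp; ring
      have h3 : ((1:ℝ) + ε) * N / (r + 1) ≤ (1 + 2 * ε) * N / (r + 1) := by
        gcongr
        linarith
      linarith
    · -- 2 ≤ k ≤ r
      have hk2'' : k ≤ r := by omega
      have hk1'' : 2 ≤ k := by omega
      have hkm1 : 1 ≤ k - 1 := by omega
      have hkm2 : k - 1 ≤ r := by omega
      have hmono' : σ (k - 1) ≤ σ k := by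
        have := hmono (k - 1) hkm1 (by omega)
        have hkk : k - 1 + 1 = k := by omega
        rwa [hkk] at this
      have hfe : Q.filter (fun y => (k = 1 ∨ σ (k - 1) < y) ∧ (k = r + 1 ∨ y < σ k))
          = Q.filter (fun y => σ (k - 1) < y ∧ y < σ k) := by
        apply Multiset.filter_congr
        intro y _
        simp [hk1', hk2']
      rw [hfe]
      by_cases hσ : σ (k - 1) < σ k
      · obtain ⟨m, hm1, hm2, hm3, hm4⟩ := hrank k (by omega) hk2''
        obtain ⟨m', hm1', hm2', hm3', hm4'⟩ := hrank (k - 1) hkm1 hkm2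
        have hsplit : (Q.filter (fun y => σ (k-1) < y ∧ y < σ k)).card
            + (Q.filter (fun y => y ≤ σ (k-1))).card = (Q.filter (fun y => y < σ k)).card := by
          have h := Multiset.filter_add_not (fun y => σ (k-1) < y) (Q.filter (fun y => y < σ k))
          have hc := congrArg Multiset.card h
          rw [Multiset.card_add] at hc
          rw [Multiset.filter_filter, Multiset.filter_filter] at hc
          have e1 : Q.filter (fun a => σ (k-1) < a ∧ a < σ k)
              = Q.filter (fun y => σ (k-1) < y ∧ y < σ k) := rfl
          have e2 : Q.filter (fun a => ¬ σ (k-1) < a ∧ a < σ k)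
              = Q.filter (fun y => y ≤ σ (k-1)) := by
            apply Multiset.filter_congr
            intro y _
            constructor
            · rintro ⟨h1, _⟩; exact not_lt.mp h1
            · intro h1; exact ⟨not_lt.mpr h1, lt_of_le_of_lt h1 hσ⟩
          rw [e1, e2] at hc
          exact hc
        have hA : ((Q.filter (fun y => σ (k-1) < y ∧ y < σ k)).card : ℝ)
            = ((Q.filter (fun y => y < σ k)).card : ℝ) - ((Q.filter (fun y => y ≤ σ (k-1))).card : ℝ) := by
          have := hsplit; push_cast [← this]; ring
        have hlt : ((Q.filter (fun y => y < σ k)).card : ℝ) ≤ (m : ℝ) - 1 := by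
          have : (Q.filter (fun y => y < σ k)).card + 1 ≤ m := hm3
          have := (Nat.cast_le (α := ℝ)).mpr this
          push_cast at this
          linarith
        have hle : ((k:ℝ) - 1 - ε) * N / (r + 1) ≤ ((Q.filter (fun y => y ≤ σ (k-1))).card : ℝ) := by
          have hc : (↑(k-1) : ℝ) = (k:ℝ) - 1 := by
            push_cast [Nat.cast_sub (by omega : 1 ≤ k)]; ring
          have := hm1'.trans ((Nat.cast_le (α := ℝ)).mpr hm4')
          rwa [hc] at this
        have hdiff : ((k:ℝ) + ε) * N / ((r:ℝ) + 1) - ((k:ℝ) - 1 - ε) * N / ((r:ℝ) + 1)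
            = (1 + 2 * ε) * N / ((r:ℝ) + 1) := by
          rw [div_sub_div_same]; ring_nf
        linarith
      · have hempty : Q.filter (fun y => σ (k-1) < y ∧ y < σ k) = 0 := by
          apply Multiset.filter_eq_nil.mpr
          intro y _ hy
          exact hσ (lt_trans hy.1 hy.2)
        rw [hempty]
        simp only [Multiset.card_zero, Nat.cast_zero]
        positivity
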